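/- Fix constants β > 0 and c > 0 with β⁴ > c, set γ := √(β² − √c) and ψ(x) := β² − x². Then there exists a unique number a ∈ (γ, β) satisfying ∫₀^a dξ/ψ(ξ)² = a/c. Moreover, the function Q(x) := ∫₀^x (c − ψ(ξ)²)/ψ(ξ)² dξ on (0, β) satisfies Q(0+) = 0, is strictly decreasing on (0, γ), is strictly increasing on (γ, β) with Q(x) → ∞ as x → β⁻, and a is its unique zero in (0, β). -/

import Mathlib

open Real Set Filter MeasureTheory intervalIntegral

noncomputable section

/-- `ψ(x) = β² - x²`, the dispersion function for the symmetric Bernoulli prior. -/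
def psiB (β x : ℝ) : ℝ := β ^ 2 - x ^ 2

/-- `Q(x) = ∫₀ˣ (c - ψ(ξ)²)/ψ(ξ)² dξ`. -/
def Qfun (β c x : ℝ) : ℝ := ∫ ξ in (0 : ℝ)..x, (c - psiB β ξ ^ 2) / psiB β ξ ^ 2

lemma psiB_pos {β x : ℝ} (hx : |x| < β) : 0 < psiB β x := by
  have h := abs_nonneg x
  have : x ^ 2 < β ^ 2 := by nlinarith [sq_abs x]
  simpa [psiB] using sub_pos.mpr this

lemma fB_contOn (β c : ℝ) (s : Set ℝ) (hs : s ⊆ Ioo (-β) β) :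
    ContinuousOn (fun ξ => (c - psiB β ξ ^ 2) / psiB β ξ ^ 2) s := by
  apply ContinuousOn.div
  · unfold psiB; fun_prop
  · unfold psiB; fun_prop
  · intro ξ hξ
    have h : 0 < psiB β ξ := psiB_pos (abs_lt.mpr ⟨(hs hξ).1, (hs hξ).2⟩)
    positivity

lemma Qfun_hasDerivAt {β c x : ℝ} (hβ : 0 < β) (hx : |x| < β) :
    HasDerivAt (Qfun β c) ((c - psiB β x ^ 2) / psiB β x ^ 2) x := by
  obtain ⟨hx1, hx2⟩ := abs_lt.mp hx
  have hmem : x ∈ Ioo (-β) β := ⟨hx1, hx2⟩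
  have h0 : (0 : ℝ) ∈ Ioo (-β) β := ⟨neg_lt_zero.mpr hβ, hβ⟩
  have hsub : uIcc (0 : ℝ) x ⊆ Ioo (-β) β := (ordConnected_Ioo).uIcc_subset h0 hmem
  have hcont := fB_contOn β c _ hsub
  have hint : IntervalIntegrable (fun ξ => (c - psiB β ξ ^ 2) / psiB β ξ ^ 2) volume 0 x :=
    hcont.intervalIntegrable
  have hca : ContinuousAt (fun ξ => (c - psiB β ξ ^ 2) / psiB β ξ ^ 2) x :=
    (fB_contOn β c _ (subset_refl _)).continuousAt (isOpen_Ioo.mem_nhds hmem)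
  exact intervalIntegral.integral_hasDerivAt_right hint
    ((fB_contOn β c _ (subset_refl _)).stronglyMeasurableAtFilter isOpen_Ioo x hmem) hca

lemma invpsi_contOn (β : ℝ) (s : Set ℝ) (hs : s ⊆ Ioo (-β) β) :
    ContinuousOn (fun ξ => 1 / psiB β ξ ^ 2) s := by
  apply ContinuousOn.div
  · fun_prop
  · unfold psiB; fun_prop
  · intro ξ hξ
    have h : 0 < psiB β ξ := psiB_pos (abs_lt.mpr ⟨(hs hξ).1, (hs hξ).2⟩)
    positivity

lemma Qfun_eq {β c x : ℝ} (hβ : 0 < β) (hx0 : 0 ≤ x) (hx : x < β) :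
    Qfun β c x = c * (∫ ξ in (0 : ℝ)..x, 1 / psiB β ξ ^ 2) - x := by
  have hsub : uIcc (0 : ℝ) x ⊆ Ioo (-β) β :=
    (ordConnected_Ioo).uIcc_subset ⟨neg_lt_zero.mpr hβ, hβ⟩ ⟨lt_of_lt_of_le (neg_lt_zero.mpr hβ) hx0, hx⟩
  have hne : ∀ ξ ∈ uIcc (0 : ℝ) x, psiB β ξ ^ 2 ≠ 0 := by
    intro ξ hξ
    have h : 0 < psiB β ξ := psiB_pos (abs_lt.mpr ⟨(hsub hξ).1, (hsub hξ).2⟩)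
    positivity
  have hcongr : Qfun β c x = ∫ ξ in (0 : ℝ)..x, (c * (1 / psiB β ξ ^ 2) - 1) := by
    apply intervalIntegral.integral_congr
    intro ξ hξ
    field_simp [hne ξ hξ]
    rw [sub_div, div_self (hne ξ hξ)]
  rw [hcongr]
  have h1 : IntervalIntegrable (fun ξ => c * (1 / psiB β ξ ^ 2)) volume 0 x :=
    (((invpsi_contOn β _ hsub)).const_smul c).intervalIntegrable
  have h2 : IntervalIntegrable (fun _ : ℝ => (1 : ℝ)) volume 0 x := intervalIntegrable_const
  rw [intervalIntegral.integral_sub h1 h2, intervalIntegral.integral_const_mul]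
  simp

/-- Subsection 4.2: for `β⁴ > c > 0` and `γ = √(β² - √c)`, there is a
unique `a ∈ (γ, β)` with `∫₀ᵃ ψ(ξ)⁻² dξ = a/c`; moreover `Q(0) = 0`, `Q` is strictly
decreasing on `(0,γ)`, strictly increasing on `(γ,β)` with `Q(x) → ∞` as `x → β⁻`, and
`a` is the unique zero of `Q` in `(0,β)`. -/
theorem bernoulli_free_boundary_point
    (β c : ℝ) (hβ : 0 < β) (hc : 0 < c) (hcb : c < β ^ 4) :
    ∃ a : ℝ, a ∈ Set.Ioo (Real.sqrt (β ^ 2 - Real.sqrt c)) β ∧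
      (∫ ξ in (0 : ℝ)..a, 1 / psiB β ξ ^ 2) = a / c ∧
      (∀ a' ∈ Set.Ioo (Real.sqrt (β ^ 2 - Real.sqrt c)) β,
        (∫ ξ in (0 : ℝ)..a', 1 / psiB β ξ ^ 2) = a' / c → a' = a) ∧
      Qfun β c 0 = 0 ∧
      StrictAntiOn (Qfun β c) (Set.Icc 0 (Real.sqrt (β ^ 2 - Real.sqrt c))) ∧
      StrictMonoOn (Qfun β c) (Set.Ico (Real.sqrt (β ^ 2 - Real.sqrt c)) β) ∧
      Tendsto (Qfun β c) (nhdsWithin β (Set.Iio β)) atTop ∧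
      ∀ x ∈ Set.Ioo (0 : ℝ) β, (Qfun β c x = 0 ↔ x = a) := by
  set γ := Real.sqrt (β ^ 2 - Real.sqrt c) with hγdef
  have hscpos : 0 < Real.sqrt c := Real.sqrt_pos.mpr hc
  have hsc : Real.sqrt c < β ^ 2 := by
    have : Real.sqrt c < Real.sqrt ((β ^ 2) ^ 2) := by
      apply Real.sqrt_lt_sqrt hc.le
      nlinarith
    rwa [Real.sqrt_sq (by positivity)] at this
  have hγ2 : γ ^ 2 = β ^ 2 - Real.sqrt c := Real.sq_sqrt (by linarith)
  have hγpos : 0 < γ := Real.sqrt_pos.mpr (by linarith)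
  have hγβ : γ < β := by
    nlinarith [hγ2, hγpos]
  have hψγ : psiB β γ = Real.sqrt c := by
    simp [psiB, hγ2]
  -- derivative sign
  have hderivneg : ∀ x ∈ Ioo (0 : ℝ) γ, (c - psiB β x ^ 2) / psiB β x ^ 2 < 0 := by
    intro x hx
    have hxβ : |x| < β := abs_lt.mpr ⟨by linarith [hx.1], by linarith [hx.2]⟩
    have hψpos : 0 < psiB β x := psiB_pos hxβ
    have hgt : Real.sqrt c < psiB β x := by
      have : x ^ 2 < γ ^ 2 := by nlinarith [hx.1, hx.2]
      simp only [psiB] at *; linarith [hγ2]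
    have : c < psiB β x ^ 2 := by nlinarith [Real.sq_sqrt hc.le]
    exact div_neg_of_neg_of_pos (by linarith) (by positivity)
  have hderivpos : ∀ x ∈ Ioo γ β, 0 < (c - psiB β x ^ 2) / psiB β x ^ 2 := by
    intro x hx
    have hxβ : |x| < β := abs_lt.mpr ⟨by linarith [hx.1, hγpos], hx.2⟩
    have hψpos : 0 < psiB β x := psiB_pos hxβ
    have hlt : psiB β x < Real.sqrt c := by
      have : γ ^ 2 < x ^ 2 := by nlinarith [hx.1, hγpos]
      simp only [psiB] at *; linarith [hγ2]
    have : psiB β x ^ 2 < c := by nlinarith [Real.sq_sqrt hc.le]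
    exact div_pos (by linarith) (by positivity)
  -- continuity of Q on [0, β)
  have hQcont : ∀ x ∈ Ico (0 : ℝ) β, ContinuousAt (Qfun β c) x := by
    intro x hx
    exact (Qfun_hasDerivAt hβ (abs_lt.mpr ⟨by linarith [hx.1], hx.2⟩)).continuousAt
  have hQderiv : ∀ x ∈ Ioo (0 : ℝ) β, deriv (Qfun β c) x = (c - psiB β x ^ 2) / psiB β x ^ 2 := by
    intro x hx
    exact (Qfun_hasDerivAt hβ (abs_lt.mpr ⟨by linarith [hx.1], hx.2⟩)).deriv
  -- strict antitonicity
  have hanti : StrictAntiOn (Qfun β c) (Icc 0 γ) := by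
    apply strictAntiOn_of_deriv_neg (convex_Icc 0 γ)
    · intro x hx
      exact (hQcont x ⟨hx.1, lt_of_le_of_lt hx.2 hγβ⟩).continuousWithinAt
    · intro x hx
      rw [interior_Icc] at hx
      rw [hQderiv x ⟨hx.1, hx.2.trans hγβ⟩]
      exact hderivneg x hx
  -- strict monotonicity
  have hmono : StrictMonoOn (Qfun β c) (Ico γ β) := by
    apply strictMonoOn_of_deriv_pos (convex_Ico γ β)
    · intro x hx
      exact (hQcont x ⟨le_trans hγpos.le hx.1, hx.2⟩).continuousWithinAt
    · intro x hx
      rw [interior_Ico] at hx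
      rw [hQderiv x ⟨hγpos.trans hx.1, hx.2⟩]
      exact hderivpos x hx
  -- lower bound for Q near β
  have hlow : ∀ x ∈ Ioo (0 : ℝ) β,
      c / (4 * β ^ 2) * (β - x)⁻¹ - (c / (4 * β ^ 2) * β⁻¹ + β) ≤ Qfun β c x := by
    intro x hx
    rw [Qfun_eq hβ hx.1.le hx.2]
    have hsub : uIcc (0 : ℝ) x ⊆ Ioo (-β) β :=
      (ordConnected_Ioo).uIcc_subset ⟨neg_lt_zero.mpr hβ, hβ⟩
        ⟨by linarith [hx.1], hx.2⟩
    have huIcc : uIcc (0 : ℝ) x = Icc 0 x := uIcc_of_le hx.1.le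
    have hgne : ∀ ξ ∈ uIcc (0 : ℝ) x, (2 * β * (β - ξ)) ≠ 0 := by
      intro ξ hξ
      rw [huIcc] at hξ
      have hξβ : ξ < β := lt_of_le_of_lt hξ.2 hx.2
      exact (by nlinarith : (0:ℝ) < 2 * β * (β - ξ)).ne'
    have hgcont : ContinuousOn (fun ξ => ((2 * β * (β - ξ)) ^ 2)⁻¹) (uIcc (0 : ℝ) x) := by
      apply ContinuousOn.inv₀
      · fun_prop
      · intro ξ hξ
        exact pow_ne_zero 2 (hgne ξ hξ)
    have hgint : IntervalIntegrable (fun ξ => ((2 * β * (β - ξ)) ^ 2)⁻¹) volume 0 x :=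
      hgcont.intervalIntegrable
    have hiint : IntervalIntegrable (fun ξ => 1 / psiB β ξ ^ 2) volume 0 x :=
      (invpsi_contOn β _ hsub).intervalIntegrable
    have key : (∫ ξ in (0 : ℝ)..x, ((2 * β * (β - ξ)) ^ 2)⁻¹)
        ≤ ∫ ξ in (0 : ℝ)..x, 1 / psiB β ξ ^ 2 := by
      apply intervalIntegral.integral_mono_on hx.1.le hgint hiint
      intro ξ hξ
      have hξβ : ξ < β := lt_of_le_of_lt hξ.2 hx.2
      have hψpos : 0 < psiB β ξ := psiB_pos (abs_lt.mpr ⟨by linarith [hξ.1], hξβ⟩)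
      have hle : psiB β ξ ≤ 2 * β * (β - ξ) := by
        simp only [psiB]; nlinarith [hξ.1, hξβ]
      rw [one_div]
      apply inv_anti₀ (by positivity)
      nlinarith
    have hcomp : (∫ ξ in (0 : ℝ)..x, ((2 * β * (β - ξ)) ^ 2)⁻¹)
        = (4 * β ^ 2)⁻¹ * (β - x)⁻¹ - (4 * β ^ 2)⁻¹ * (β - 0)⁻¹ := by
      have hFT := intervalIntegral.integral_eq_sub_of_hasDerivAt
        (f := fun ξ => (4 * β ^ 2)⁻¹ * (β - ξ)⁻¹)
        (f' := fun ξ => ((2 * β * (β - ξ)) ^ 2)⁻¹) (a := (0:ℝ)) (b := x) ?_ hgint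
      · simpa using hFT
      · intro ξ hξ
        have hne : β - ξ ≠ 0 := by
          have := hgne ξ hξ
          intro h; apply this; rw [h]; ring
        have h1 : HasDerivAt (fun ξ : ℝ => (β - ξ)⁻¹) (-(-1) / (β - ξ) ^ 2) ξ :=
          ((hasDerivAt_id ξ).const_sub β).inv hne
        have h2 := h1.const_mul ((4 * β ^ 2)⁻¹)
        refine h2.congr_deriv ?_
        show (4 * β ^ 2)⁻¹ * (- -1 / (β - ξ) ^ 2) = ((2 * β * (β - ξ)) ^ 2)⁻¹
        rw [neg_neg, one_div, ← mul_inv]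
        congr 1
        ring
    have hc4 : (0:ℝ) < c / (4 * β ^ 2) := by positivity
    have := mul_le_mul_of_nonneg_left key (le_of_lt hc)
    rw [hcomp] at this
    rw [sub_zero] at this
    have e1 : c * ((4 * β ^ 2)⁻¹ * (β - x)⁻¹ - (4 * β ^ 2)⁻¹ * β⁻¹)
        = c / (4 * β ^ 2) * (β - x)⁻¹ - c / (4 * β ^ 2) * β⁻¹ := by ring
    rw [e1] at this
    have hxb : x ≤ β := hx.2.le
    linarith
  -- tendsto atTop
  have htend : Tendsto (Qfun β c) (nhdsWithin β (Set.Iio β)) atTop := by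
    have hinv : Tendsto (fun x => (β - x)⁻¹) (nhdsWithin β (Set.Iio β)) atTop := by
      apply tendsto_inv_nhdsGT_zero.comp
      apply tendsto_nhdsWithin_of_tendsto_nhds_of_eventually_within
      · have : Tendsto (fun x : ℝ => β - x) (nhds β) (nhds (β - β)) :=
          (continuous_const.sub continuous_id).tendsto β
        simpa using this.mono_left nhdsWithin_le_nhds
      · filter_upwards [self_mem_nhdsWithin] with x hx
        exact sub_pos.mpr (mem_Iio.mp hx)
    have h2 : Tendsto (fun x => c / (4 * β ^ 2) * (β - x)⁻¹) (nhdsWithin β (Set.Iio β)) atTop :=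
      hinv.const_mul_atTop (by positivity)
    have h3 : Tendsto (fun x => c / (4 * β ^ 2) * (β - x)⁻¹ - (c / (4 * β ^ 2) * β⁻¹ + β))
        (nhdsWithin β (Set.Iio β)) atTop := tendsto_atTop_add_const_right _ _ h2
    apply tendsto_atTop_mono' _ _ h3
    filter_upwards [Ioo_mem_nhdsLT_of_mem (show β ∈ Ioc (0:ℝ) β from ⟨hβ, le_refl β⟩)] with x hx
    exact hlow x hx
  -- Q 0 = 0 and Q γ < 0
  have hQ0 : Qfun β c 0 = 0 := intervalIntegral.integral_same
  have hQγ : Qfun β c γ < 0 := by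
    have := hanti ⟨le_refl 0, hγpos.le⟩ ⟨hγpos.le, le_refl γ⟩ hγpos
    rwa [hQ0] at this
  -- find b with Q b > 0
  obtain ⟨b, hbQ, hbmem⟩ : ∃ b, 0 < Qfun β c b ∧ b ∈ Ioo γ β := by
    have hev2 := (htend.eventually_gt_atTop 0).and
      (Filter.eventually_of_mem (Ioo_mem_nhdsLT_of_mem
        (show β ∈ Ioc γ β from ⟨hγβ, le_refl β⟩)) (fun x hx => hx))
    exact hev2.exists
  -- IVT
  have hQcontIcc : ContinuousOn (Qfun β c) (Icc γ b) := by
    intro x hx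
    exact (hQcont x ⟨le_trans hγpos.le hx.1, lt_of_le_of_lt hx.2 hbmem.2⟩).continuousWithinAt
  have hIVT := intermediate_value_Ioo (le_of_lt hbmem.1) hQcontIcc
  have h0mem : (0 : ℝ) ∈ Ioo (Qfun β c γ) (Qfun β c b) := ⟨hQγ, hbQ⟩
  obtain ⟨a, haIoo, hQa⟩ := hIVT h0mem
  have haγβ : a ∈ Ioo γ β := ⟨haIoo.1, haIoo.2.trans hbmem.2⟩
  -- Q x = 0 ↔ I x = x / c  on [0, β)
  have hQzero_iff : ∀ x ∈ Ico (0:ℝ) β,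
      (Qfun β c x = 0 ↔ (∫ ξ in (0 : ℝ)..x, 1 / psiB β ξ ^ 2) = x / c) := by
    intro x hx
    rw [Qfun_eq hβ hx.1 hx.2]
    constructor
    · intro h
      field_simp
      linarith
    · intro h
      rw [h]
      field_simp
      ring
  refine ⟨a, haγβ, ?_, ?_, hQ0, hanti, hmono, htend, ?_⟩
  · exact (hQzero_iff a ⟨le_trans hγpos.le haγβ.1.le, haγβ.2⟩).mp hQa
  · intro a' ha' hInt
    have hQa' : Qfun β c a' = 0 :=
      (hQzero_iff a' ⟨le_trans hγpos.le ha'.1.le, ha'.2⟩).mpr hInt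
    exact hmono.injOn ⟨ha'.1.le, ha'.2⟩ ⟨haγβ.1.le, haγβ.2⟩ (hQa'.trans hQa.symm)
  · intro x hx
    constructor
    · intro hQx
      rcases le_or_gt x γ with h | h
      · exfalso
        have : Qfun β c x < Qfun β c 0 := hanti ⟨le_refl 0, hγpos.le⟩ ⟨hx.1.le, h⟩ hx.1
        rw [hQ0, hQx] at this
        exact lt_irrefl 0 this
      · exact hmono.injOn ⟨h.le, hx.2⟩ ⟨haγβ.1.le, haγβ.2⟩ (hQx.trans hQa.symm)
    · rintro rfl
      exact hQa
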